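/- Per-round termination of the Witness Protection generator: fix a time t and suppose the active set V_t = {i ≤ t : S_t ⊆ supp(h_i)} is nonempty. Then (a) the minimal index in V_t is (t,m)-critical with replay for every m; (b) for fixed t, the predicate 'h_i is (t,m)-critical with replay' is antitone in m (once false at m' it stays false for all m ≥ m'), so the largest critical index n^{(t,m)} stabilizes to some value n̄ for all large m; and (c) since the excluded set S_t ∪ O_{t−1} ∪ W^{(t,m)} has cardinality at most 2t + t², and supp(h_{n̄}) is infinite, for all sufficiently large m the set supp(h_{n̄}) ∩ {1,...,m} minus the excluded set is nonempty. -/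

import Mathlib

/-- h_n is (t,m)-critical with replay (relative to the sure set `S` and the past
outputs `O`): `S ⊆ supp(h_n)`, and for every earlier consistent index `i < n`,
`supp(h_n)[m] ⊆ supp(h_i)[m] ∪ O`, where `supp(h)[m] = supp(h) ∩ {1,...,m}`. -/
def Critical (hyp : ℕ → Set ℕ) (S O : Set ℕ) (n m : ℕ) : Prop :=
  S ⊆ hyp n ∧ ∀ i < n, S ⊆ hyp i → hyp n ∩ Set.Iic m ⊆ (hyp i ∩ Set.Iic m) ∪ O

/-- Per-round termination of the Witness Protection generator:
(a) the minimal index of the nonempty active set V_t is (t,m)-critical for every m;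
(b) criticality is antitone in m, so the largest critical index stabilizes to some n̄;
(c) since the excluded set S_t ∪ O_{t−1} ∪ W^{(t,m)} is uniformly finite and
supp(h_n̄) is infinite, for all sufficiently large m there is an admissible output. -/
theorem statement12 (hyp : ℕ → Set ℕ) (t : ℕ) (S O : Finset ℕ) (W : ℕ → Finset ℕ)
    (hS : S.card ≤ t) (hO : O.card ≤ t) (hW : ∀ m, (W m).card ≤ t * (t - 1) / 2)
    (hinf : ∀ i, (hyp i).Infinite)
    (hVne : {i | i ≤ t ∧ (S : Set ℕ) ⊆ hyp i}.Nonempty) :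
    (∀ m, Critical hyp ↑S ↑O (sInf {i | i ≤ t ∧ (S : Set ℕ) ⊆ hyp i}) m) ∧
    (∀ n m m', m ≤ m' → Critical hyp ↑S ↑O n m' → Critical hyp ↑S ↑O n m) ∧
    (∃ m0 nbar, (∀ m, m0 ≤ m → sSup {n | n ≤ t ∧ Critical hyp ↑S ↑O n m} = nbar) ∧
      ∃ m1, ∀ m, m1 ≤ m →
        ((hyp nbar ∩ Set.Iic m) \ ↑(S ∪ O ∪ W m)).Nonempty) := by
  have hmin : sInf {i | i ≤ t ∧ (S : Set ℕ) ⊆ hyp i} ∈ {i | i ≤ t ∧ (S : Set ℕ) ⊆ hyp i} :=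
    Nat.sInf_mem hVne
  have parta : ∀ m, Critical hyp ↑S ↑O (sInf {i | i ≤ t ∧ (S : Set ℕ) ⊆ hyp i}) m := by
    intro m
    refine ⟨hmin.2, fun i hi hSi => absurd
      (Nat.sInf_le (show i ∈ {i | i ≤ t ∧ (S : Set ℕ) ⊆ hyp i} from ⟨le_trans hi.le hmin.1, hSi⟩))
      (not_le.mpr hi)⟩
  have partb : ∀ n m m', m ≤ m' → Critical hyp ↑S ↑O n m' → Critical hyp ↑S ↑O n m := by
    rintro n m m' hmm' ⟨h1, h2⟩
    refine ⟨h1, fun i hi hSi x hx => ?_⟩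
    rcases h2 i hi hSi ⟨hx.1, hx.2.trans hmm'⟩ with h | h
    · exact Or.inl ⟨h.1, hx.2⟩
    · exact Or.inr h
  refine ⟨parta, partb, ?_⟩
  set f : ℕ → ℕ := fun m => sSup {n | n ≤ t ∧ Critical hyp ↑S ↑O n m} with hf
  have hne : ∀ m, {n | n ≤ t ∧ Critical hyp ↑S ↑O n m}.Nonempty :=
    fun m => ⟨_, hmin.1, parta m⟩
  have hbdd : ∀ m, BddAbove {n | n ≤ t ∧ Critical hyp ↑S ↑O n m} :=
    fun m => ⟨t, fun n hn => hn.1⟩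
  have hanti : ∀ m m', m ≤ m' → f m' ≤ f m := fun m m' h =>
    csSup_le_csSup (hbdd m) (hne m') (fun n hn => ⟨hn.1, partb n m m' h hn.2⟩)
  obtain ⟨m0, hm0⟩ : ∃ m0, f m0 = sInf (Set.range f) :=
    Nat.sInf_mem (Set.range_nonempty f)
  refine ⟨m0, f m0, fun m hm => le_antisymm (hanti m0 m hm)
    (hm0 ▸ Nat.sInf_le ⟨m, rfl⟩), ?_⟩
  obtain ⟨F, hFsub, hFcard⟩ := (hinf (f m0)).exists_subset_card_eq (t + t + t * (t - 1) / 2 + 1)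
  refine ⟨F.sup id, fun m hm => ?_⟩
  have hcard : (S ∪ O ∪ W m).card < F.card := by
    have h1 : (S ∪ O ∪ W m).card ≤ S.card + O.card + (W m).card :=
      le_trans (Finset.card_union_le _ _) (Nat.add_le_add_right (Finset.card_union_le _ _) _)
    have := hW m
    omega
  obtain ⟨x, hxF, hxnot⟩ : ∃ x ∈ F, x ∉ S ∪ O ∪ W m := by
    by_contra hc
    push_neg at hc
    exact absurd (Finset.card_le_card hc) (not_le.mpr hcard)
  exact ⟨x, ⟨⟨hFsub hxF, le_trans (Finset.le_sup (f := id) hxF) hm⟩, by simpa using hxnot⟩⟩
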